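/- Let c be a copula density on [0,1]² such that for every x the map y ↦ c(x,y) is continuously differentiable on [0,1], the function x ↦ c(x,1) − c(x,0) is in L²(0,1), and the function x ↦ ∫₀¹ |∂₂c(x,y)| dy is in L²(0,1). Set k₁ = ∫₀¹ (∫₀¹ |∂₂c(x,y)| dy)² dx and k₂ = ∫₀¹ (|c(x,1) − c(x,0)| + ∫₀¹ |∂₂c(x,y)| dy)² dx. Then for every mean-zero f ∈ L²(0,1), ∫₀¹ (∫₀¹ c(x,y) f(y) dy)² dx ≤ ((k₁ + k₂)/12) ∫₀¹ f². In particular, if k₁ + k₂ < 12 then the maximal correlation coefficient ρ₁ = sup{∫₀¹∫₀¹ c(x,y) f(x) g(y) dx dy : ‖f‖₂ = ‖g‖₂ = 1, f, g mean-zero} satisfies ρ₁ ≤ √((k₁+k₂)/12) < 1. -/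

import Mathlib

open MeasureTheory

/-- The unit interval `[0,1]` as a subset of `ℝ`. -/
def I01 : Set ℝ := Set.Icc 0 1

/-- Lebesgue measure restricted to `[0,1]`. -/
noncomputable def μ01 : Measure ℝ := volume.restrict I01

lemma I01_meas : MeasurableSet I01 := measurableSet_Icc

instance : IsProbabilityMeasure (volume.restrict I01) :=
  ⟨by simp [I01, Real.volume_Icc]⟩

/-- Cauchy–Schwarz for integrals. -/
lemma cs_int {μ : Measure ℝ} (f g : ℝ → ℝ) (hf2 : Integrable (fun x => f x ^ 2) μ)
    (hg2 : Integrable (fun x => g x ^ 2) μ) (hfg : Integrable (fun x => f x * g x) μ) :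
    (∫ x, f x * g x ∂μ) ^ 2 ≤ (∫ x, f x ^ 2 ∂μ) * (∫ x, g x ^ 2 ∂μ) := by
  have key : ∀ lam : ℝ, 0 ≤ (∫ x, f x ^ 2 ∂μ) * (lam * lam) +
      (2 * ∫ x, f x * g x ∂μ) * lam + (∫ x, g x ^ 2 ∂μ) := by
    intro lam
    have h0 : 0 ≤ ∫ x, (lam * f x + g x) ^ 2 ∂μ := integral_nonneg fun x => sq_nonneg _
    have hexp : ∫ x, (lam * f x + g x) ^ 2 ∂μ
        = (∫ x, f x ^ 2 ∂μ) * (lam * lam) + (2 * ∫ x, f x * g x ∂μ) * lam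
          + (∫ x, g x ^ 2 ∂μ) := by
      have hrw : (fun x => (lam * f x + g x) ^ 2)
          = fun x => (lam * lam) * f x ^ 2 + ((2 * lam) * (f x * g x) + g x ^ 2) := by
        funext x; ring
      have h1 : ∫ x, ((lam * lam) * f x ^ 2 + ((2 * lam) * (f x * g x) + g x ^ 2)) ∂μ
          = (∫ x, (lam * lam) * f x ^ 2 ∂μ)
            + ∫ x, ((2 * lam) * (f x * g x) + g x ^ 2) ∂μ :=
        integral_add (hf2.const_mul _) ((hfg.const_mul _).add hg2)
      have h2 : ∫ x, ((2 * lam) * (f x * g x) + g x ^ 2) ∂μ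
          = (∫ x, (2 * lam) * (f x * g x) ∂μ) + ∫ x, g x ^ 2 ∂μ :=
        integral_add (hfg.const_mul _) hg2
      rw [hrw, h1, h2, integral_const_mul, integral_const_mul]
      ring
    linarith [hexp ▸ h0]
  have hd := discrim_le_zero key
  rw [discrim] at hd
  nlinarith [hd]

lemma ftc_piece (h h' : ℝ → ℝ)
    (hd : ∀ y ∈ I01, HasDerivWithinAt h (h' y) I01 y)
    (hc : ContinuousOn h' I01)
    {u v : ℝ} (hu : u ∈ I01) (hv : v ∈ I01) (huv : u ≤ v) :
    |h v - h u| ≤ ∫ y in u..v, |h' y| := by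
  have hsub : Set.Icc u v ⊆ I01 := Set.Icc_subset_Icc hu.1 hv.2
  have hcont : ContinuousOn h (Set.Icc u v) := fun y hy =>
    ((hd y (hsub hy)).continuousWithinAt).mono hsub
  have hint : IntervalIntegrable h' volume u v := by
    apply ContinuousOn.intervalIntegrable
    rw [Set.uIcc_of_le huv]; exact hc.mono hsub
  have heq : ∫ y in u..v, h' y = h v - h u := by
    apply intervalIntegral.integral_eq_sub_of_hasDeriv_right_of_le huv hcont _ hint
    intro y hy
    have hy' : y ∈ Set.Ioo (0:ℝ) 1 := ⟨lt_of_le_of_lt hu.1 hy.1, lt_of_lt_of_le hy.2 hv.2⟩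
    have hyI : y ∈ I01 := Set.Ioo_subset_Icc_self hy'
    have hInhds : I01 ∈ nhds y := Icc_mem_nhds hy'.1 hy'.2
    exact (((hd y hyI).hasDerivAt hInhds).hasDerivWithinAt)
  rw [← heq]
  exact intervalIntegral.abs_integral_le_integral_abs huv

lemma core_bound (h h' : ℝ → ℝ)
    (hd : ∀ y ∈ I01, HasDerivWithinAt h (h' y) I01 y)
    (hc : ContinuousOn h' I01) :
    ∃ κ : ℝ, ∀ y ∈ I01, |h y - κ| ≤ ((∫ y in I01, |h' y|) + |h 1 - h 0|) / 4 := by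
  have hcont : ContinuousOn h I01 := fun y hy => (hd y hy).continuousWithinAt
  have hne : I01.Nonempty := ⟨0, by constructor <;> norm_num⟩
  have hcomp : IsCompact I01 := isCompact_Icc
  obtain ⟨s, hsI, hsmax⟩ := hcomp.exists_isMaxOn hne hcont
  obtain ⟨t, htI, htmin⟩ := hcomp.exists_isMinOn hne hcont
  have h0I : (0:ℝ) ∈ I01 := ⟨le_refl 0, by norm_num⟩
  have h1I : (1:ℝ) ∈ I01 := ⟨by norm_num, le_refl 1⟩
  set A := ∫ y in I01, |h' y| with hA
  -- the set integral equals the interval integral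
  have hAeq : A = ∫ y in (0:ℝ)..1, |h' y| := by
    rw [intervalIntegral.integral_of_le zero_le_one, hA]
    exact integral_Icc_eq_integral_Ioc
  have hint : ∀ u v : ℝ, u ∈ I01 → v ∈ I01 → IntervalIntegrable (fun y => |h' y|) volume u v := by
    intro u v hu hv
    apply ContinuousOn.intervalIntegrable
    apply (hc.abs).mono
    intro z hz
    rcases le_total u v with huv | huv
    · rw [Set.uIcc_of_le huv] at hz; exact Set.Icc_subset_Icc hu.1 hv.2 hz
    · rw [Set.uIcc_of_ge huv] at hz; exact Set.Icc_subset_Icc hv.1 hu.2 hz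
  -- key claim : 2*(h s - h t) ≤ A + |h 1 - h 0|
  have hkey : 2 * (h s - h t) ≤ A + |h 1 - h 0| := by
    rcases le_total s t with hst | hts
    · have hsplit : (∫ y in (0:ℝ)..s, |h' y|) + (∫ y in s..t, |h' y|) = ∫ y in (0:ℝ)..t, |h' y| :=
        intervalIntegral.integral_add_adjacent_intervals (hint 0 s h0I hsI) (hint s t hsI htI)
      have hsplit2 : (∫ y in (0:ℝ)..t, |h' y|) + (∫ y in t..1, |h' y|) = ∫ y in (0:ℝ)..1, |h' y| :=
        intervalIntegral.integral_add_adjacent_intervals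
          ((hint 0 s h0I hsI).trans (hint s t hsI htI)) (hint t 1 htI h1I)
      have e1 : |h s - h 0| ≤ ∫ y in (0:ℝ)..s, |h' y| := ftc_piece h h' hd hc h0I hsI hsI.1
      have e2 : |h t - h s| ≤ ∫ y in s..t, |h' y| := ftc_piece h h' hd hc hsI htI hst
      have e3 : |h 1 - h t| ≤ ∫ y in t..1, |h' y| := ftc_piece h h' hd hc htI h1I htI.2
      have f1 : h s - h 0 ≤ |h s - h 0| := le_abs_self _
      have f2 : h s - h t ≤ |h t - h s| := by rw [abs_sub_comm]; exact le_abs_self _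
      have f3 : h 1 - h t ≤ |h 1 - h t| := le_abs_self _
      have f4 : -(|h 1 - h 0|) ≤ h 1 - h 0 := neg_abs_le _
      rw [hAeq]
      linarith
    · have hsplit : (∫ y in (0:ℝ)..t, |h' y|) + (∫ y in t..s, |h' y|) = ∫ y in (0:ℝ)..s, |h' y| :=
        intervalIntegral.integral_add_adjacent_intervals (hint 0 t h0I htI) (hint t s htI hsI)
      have hsplit2 : (∫ y in (0:ℝ)..s, |h' y|) + (∫ y in s..1, |h' y|) = ∫ y in (0:ℝ)..1, |h' y| :=
        intervalIntegral.integral_add_adjacent_intervals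
          ((hint 0 t h0I htI).trans (hint t s htI hsI)) (hint s 1 hsI h1I)
      have e1 : |h t - h 0| ≤ ∫ y in (0:ℝ)..t, |h' y| := ftc_piece h h' hd hc h0I htI htI.1
      have e2 : |h s - h t| ≤ ∫ y in t..s, |h' y| := ftc_piece h h' hd hc htI hsI hts
      have e3 : |h 1 - h s| ≤ ∫ y in s..1, |h' y| := ftc_piece h h' hd hc hsI h1I hsI.2
      have f1 : h 0 - h t ≤ |h t - h 0| := by rw [abs_sub_comm]; exact le_abs_self _
      have f2 : h s - h t ≤ |h s - h t| := le_abs_self _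
      have f3 : h s - h 1 ≤ |h 1 - h s| := by rw [abs_sub_comm]; exact le_abs_self _
      have f4 : h 1 - h 0 ≤ |h 1 - h 0| := le_abs_self _
      rw [hAeq]
      linarith
  refine ⟨(h s + h t) / 2, fun y hy => ?_⟩
  have hyle : h y ≤ h s := hsmax hy
  have hyge : h t ≤ h y := htmin hy
  rw [abs_le]
  constructor <;> [skip; skip] <;> nlinarith [hkey, hyle, hyge]

lemma key_est (h h' f : ℝ → ℝ)
    (hd : ∀ y ∈ I01, HasDerivWithinAt h (h' y) I01 y)
    (hc : ContinuousOn h' I01)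
    (hf : MemLp f 2 (volume.restrict I01))
    (hf0 : (∫ y in I01, f y) = 0) :
    (∫ y in I01, h y * f y) ^ 2 ≤
      (((∫ y in I01, |h' y|) ^ 2 + (|h 1 - h 0| + ∫ y in I01, |h' y|) ^ 2) / 12) *
        (∫ y in I01, f y ^ 2) ∧
    |∫ y in I01, h y * f y| ≤
      (((∫ y in I01, |h' y|) + |h 1 - h 0|) / 4) * (∫ y in I01, |f y|) := by
  obtain ⟨κ, hκ⟩ := core_bound h h' hd hc
  set A := ∫ y in I01, |h' y| with hA
  set δ := |h 1 - h 0| with hδ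
  set B := (A + δ) / 4 with hB
  have hA0 : 0 ≤ A := integral_nonneg fun y => abs_nonneg _
  have hδ0 : 0 ≤ δ := abs_nonneg _
  have hcont : ContinuousOn h I01 := fun y hy => (hd y hy).continuousWithinAt
  have hφm : AEStronglyMeasurable (fun y => h y - κ) (volume.restrict I01) :=
    (hcont.sub continuousOn_const).aestronglyMeasurable I01_meas
  have hφbd : ∀ᵐ y ∂(volume.restrict I01), ‖h y - κ‖ ≤ B :=
    (ae_restrict_mem I01_meas).mono fun y hy => by
      simpa [Real.norm_eq_abs] using hκ y hy
  have hφ2 : MemLp (fun y => h y - κ) 2 (volume.restrict I01) :=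
    MemLp.of_bound hφm B hφbd
  have hf1 : Integrable f (volume.restrict I01) := hf.integrable one_le_two
  have hφf : Integrable (fun y => (h y - κ) * f y) (volume.restrict I01) :=
    Integrable.bdd_mul hf1 hφm hφbd
  -- the representation : ∫ h f = ∫ (h - κ) f
  have hrep : (∫ y in I01, h y * f y) = ∫ y in I01, (h y - κ) * f y := by
    have e1 : ∫ y in I01, (h y - κ) * f y
        = (∫ y in I01, h y * f y) - ∫ y in I01, κ * f y := by
      have : ∫ y in I01, (h y * f y - κ * f y)
          = (∫ y in I01, h y * f y) - ∫ y in I01, κ * f y := by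
        apply integral_sub
        · exact (hφf.add (hf1.const_mul κ)).congr
            (Filter.Eventually.of_forall fun y => by simp only [Pi.add_apply]; ring)
        · exact hf1.const_mul κ
      simpa [sub_mul] using this
    rw [e1, integral_const_mul, hf0]
    ring
  -- Cauchy–Schwarz
  have hcs : (∫ y in I01, (h y - κ) * f y) ^ 2 ≤
      (∫ y in I01, (h y - κ) ^ 2) * ∫ y in I01, f y ^ 2 :=
    cs_int _ f hφ2.integrable_sq hf.integrable_sq hφf
  have hφsq : (∫ y in I01, (h y - κ) ^ 2) ≤ B ^ 2 := by
    have hmono : (∫ y in I01, (h y - κ) ^ 2) ≤ ∫ _y in I01, B ^ 2 := by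
      apply integral_mono_of_nonneg
      · exact Filter.Eventually.of_forall fun y => sq_nonneg _
      · exact integrable_const _
      · refine (ae_restrict_mem I01_meas).mono fun y hy => ?_
        show (h y - κ) ^ 2 ≤ B ^ 2
        have h1 := hκ y hy
        nlinarith [abs_nonneg (h y - κ), sq_abs (h y - κ)]
    simpa using hmono
  have hf2nn : 0 ≤ ∫ y in I01, f y ^ 2 := integral_nonneg fun y => sq_nonneg _
  constructor
  · rw [hrep]
    calc (∫ y in I01, (h y - κ) * f y) ^ 2
        ≤ (∫ y in I01, (h y - κ) ^ 2) * ∫ y in I01, f y ^ 2 := hcs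
      _ ≤ B ^ 2 * ∫ y in I01, f y ^ 2 := by
          apply mul_le_mul_of_nonneg_right hφsq hf2nn
      _ ≤ ((A ^ 2 + (δ + A) ^ 2) / 12) * ∫ y in I01, f y ^ 2 := by
          apply mul_le_mul_of_nonneg_right _ hf2nn
          rw [hB]
          nlinarith [hA0, hδ0]
  · rw [hrep]
    calc |∫ y in I01, (h y - κ) * f y| ≤ ∫ y in I01, |h y - κ| * |f y| := by
          simpa [Real.norm_eq_abs, abs_mul] using
            norm_integral_le_integral_norm (μ := volume.restrict I01)
              (fun y => (h y - κ) * f y)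
      _ ≤ ∫ y in I01, B * |f y| := by
          apply integral_mono_of_nonneg
          · exact Filter.Eventually.of_forall fun y => mul_nonneg (abs_nonneg _) (abs_nonneg _)
          · exact (hf1.abs).const_mul B
          · refine (ae_restrict_mem I01_meas).mono fun y hy => ?_
            show |h y - κ| * |f y| ≤ B * |f y|
            exact mul_le_mul_of_nonneg_right (hκ y hy) (abs_nonneg _)
      _ = B * ∫ y in I01, |f y| := integral_const_mul B _

lemma part1 (c c₂ : ℝ → ℝ → ℝ)
    (hderiv : ∀ x ∈ I01, ∀ y ∈ I01, HasDerivWithinAt (c x) (c₂ x y) I01 y)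
    (hderiv_cont : ∀ x ∈ I01, ContinuousOn (c₂ x) I01)
    (hL2_bd : MemLp (fun x => c x 1 - c x 0) 2 (volume.restrict I01))
    (hL2_int : MemLp (fun x => ∫ y in I01, |c₂ x y|) 2 (volume.restrict I01)) :
    ∀ f : ℝ → ℝ, MemLp f 2 (volume.restrict I01) → (∫ x in I01, f x) = 0 →
      (∫ x in I01, (∫ y in I01, c x y * f y) ^ 2) ≤
        (((∫ x in I01, (∫ y in I01, |c₂ x y|) ^ 2) +
            (∫ x in I01, (|c x 1 - c x 0| + ∫ y in I01, |c₂ x y|) ^ 2)) / 12) *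
          (∫ x in I01, f x ^ 2) := by
  intro f hf hf0
  have habs : MemLp (fun x => |c x 1 - c x 0|) 2 (volume.restrict I01) := by
    simpa [Real.norm_eq_abs] using hL2_bd.norm
  have hB : MemLp (fun x => |c x 1 - c x 0| + ∫ y in I01, |c₂ x y|) 2 (volume.restrict I01) :=
    habs.add hL2_int
  have hA2 : Integrable (fun x => (∫ y in I01, |c₂ x y|) ^ 2) (volume.restrict I01) :=
    hL2_int.integrable_sq
  have hB2 : Integrable (fun x => (|c x 1 - c x 0| + ∫ y in I01, |c₂ x y|) ^ 2)
      (volume.restrict I01) := hB.integrable_sq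
  have hint : Integrable (fun x =>
      (((∫ y in I01, |c₂ x y|) ^ 2 + (|c x 1 - c x 0| + ∫ y in I01, |c₂ x y|) ^ 2) / 12) *
        (∫ y in I01, f y ^ 2)) (volume.restrict I01) :=
    ((hA2.add hB2).div_const 12).mul_const _
  have hae : ∀ᵐ x ∂(volume.restrict I01),
      (∫ y in I01, c x y * f y) ^ 2 ≤
        (((∫ y in I01, |c₂ x y|) ^ 2 + (|c x 1 - c x 0| + ∫ y in I01, |c₂ x y|) ^ 2) / 12) *
          (∫ y in I01, f y ^ 2) := by
    refine (ae_restrict_mem I01_meas).mono fun x hx => ?_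
    exact (key_est (c x) (c₂ x) f (hderiv x hx) (hderiv_cont x hx) hf hf0).1
  calc (∫ x in I01, (∫ y in I01, c x y * f y) ^ 2)
      ≤ ∫ x in I01,
          ((((∫ y in I01, |c₂ x y|) ^ 2 + (|c x 1 - c x 0| + ∫ y in I01, |c₂ x y|) ^ 2) / 12) *
            (∫ y in I01, f y ^ 2)) :=
        integral_mono_of_nonneg (Filter.Eventually.of_forall fun x => sq_nonneg _) hint hae
    _ = (((∫ x in I01, (∫ y in I01, |c₂ x y|) ^ 2) +
            (∫ x in I01, (|c x 1 - c x 0| + ∫ y in I01, |c₂ x y|) ^ 2)) / 12) *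
          (∫ x in I01, f x ^ 2) := by
        rw [integral_mul_const, integral_div, integral_add hA2 hB2]

lemma mul_int_of_L2 {μ : Measure ℝ} {f g : ℝ → ℝ} (hf : MemLp f 2 μ) (hg : MemLp g 2 μ) :
    Integrable (fun x => f x * g x) μ := by
  refine Integrable.mono' ((hf.integrable_sq.add hg.integrable_sq).div_const 2)
    (hf.1.mul hg.1) ?_
  refine Filter.Eventually.of_forall fun x => ?_
  rw [Real.norm_eq_abs, abs_mul]
  simp only [Pi.add_apply]
  nlinarith [sq_nonneg (|f x| - |g x|), sq_abs (f x), sq_abs (g x), abs_nonneg (f x),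
    abs_nonneg (g x)]

/-- Let `c` be a copula density on `[0,1]²` such that for every
`x` the map `y ↦ c(x,y)` is continuously differentiable on `[0,1]` (with partial
derivative `c₂`), `x ↦ c(x,1) − c(x,0)` is in `L²(0,1)`, and
`x ↦ ∫₀¹ |∂₂c(x,y)| dy` is in `L²(0,1)`.  With
`k₁ = ∫₀¹ (∫₀¹ |∂₂c(x,y)| dy)² dx` and
`k₂ = ∫₀¹ (|c(x,1) − c(x,0)| + ∫₀¹ |∂₂c(x,y)| dy)² dx`,
for every mean-zero `f ∈ L²(0,1)` one has
`∫₀¹ (∫₀¹ c(x,y) f(y) dy)² dx ≤ ((k₁ + k₂)/12) ∫₀¹ f²`; in particular, if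
`k₁ + k₂ < 12` then the maximal correlation coefficient satisfies
`ρ₁ ≤ √((k₁+k₂)/12) < 1`. -/
theorem copula_density_deriv_rho_bound
    (c c₂ : ℝ → ℝ → ℝ)
    (hc_meas : Measurable (Function.uncurry c))
    (hc_nonneg : ∀ x y, 0 ≤ c x y)
    (hmarg_x : ∀ᵐ y ∂μ01, (∫ x in I01, c x y) = 1)
    (hmarg_y : ∀ᵐ x ∂μ01, (∫ y in I01, c x y) = 1)
    (hderiv : ∀ x ∈ I01, ∀ y ∈ I01, HasDerivWithinAt (c x) (c₂ x y) I01 y)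
    (hderiv_cont : ∀ x ∈ I01, ContinuousOn (c₂ x) I01)
    (hL2_bd : MemLp (fun x => c x 1 - c x 0) 2 μ01)
    (hL2_int : MemLp (fun x => ∫ y in I01, |c₂ x y|) 2 μ01) :
    (∀ f : ℝ → ℝ, MemLp f 2 μ01 → (∫ x in I01, f x) = 0 →
      (∫ x in I01, (∫ y in I01, c x y * f y) ^ 2) ≤
        (((∫ x in I01, (∫ y in I01, |c₂ x y|) ^ 2) +
            (∫ x in I01, (|c x 1 - c x 0| + ∫ y in I01, |c₂ x y|) ^ 2)) / 12) *
          (∫ x in I01, f x ^ 2)) ∧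
    ((∫ x in I01, (∫ y in I01, |c₂ x y|) ^ 2) +
        (∫ x in I01, (|c x 1 - c x 0| + ∫ y in I01, |c₂ x y|) ^ 2) < 12 →
      sSup {r : ℝ | ∃ f g : ℝ → ℝ, MemLp f 2 μ01 ∧ MemLp g 2 μ01 ∧
            (∫ x in I01, f x) = 0 ∧ (∫ x in I01, g x) = 0 ∧
            (∫ x in I01, f x ^ 2) = 1 ∧ (∫ x in I01, g x ^ 2) = 1 ∧
            r = ∫ x in I01, ∫ y in I01, c x y * f x * g y} ≤
          Real.sqrt (((∫ x in I01, (∫ y in I01, |c₂ x y|) ^ 2) +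
            (∫ x in I01, (|c x 1 - c x 0| + ∫ y in I01, |c₂ x y|) ^ 2)) / 12) ∧
      Real.sqrt (((∫ x in I01, (∫ y in I01, |c₂ x y|) ^ 2) +
        (∫ x in I01, (|c x 1 - c x 0| + ∫ y in I01, |c₂ x y|) ^ 2)) / 12) < 1) := by
  have hp1 := part1 c c₂ hderiv hderiv_cont hL2_bd hL2_int
  refine ⟨hp1, fun hlt => ?_⟩
  have hk1 : 0 ≤ ∫ x in I01, (∫ y in I01, |c₂ x y|) ^ 2 :=
    integral_nonneg fun x => sq_nonneg _
  have hk2 : 0 ≤ ∫ x in I01, (|c x 1 - c x 0| + ∫ y in I01, |c₂ x y|) ^ 2 :=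
    integral_nonneg fun x => sq_nonneg _
  set k₁ := ∫ x in I01, (∫ y in I01, |c₂ x y|) ^ 2 with hk₁def
  set k₂ := ∫ x in I01, (|c x 1 - c x 0| + ∫ y in I01, |c₂ x y|) ^ 2 with hk₂def
  have hKnn : 0 ≤ (k₁ + k₂) / 12 := by positivity
  constructor
  · apply Real.sSup_le _ (Real.sqrt_nonneg _)
    rintro r ⟨f, g, hf, hg, hf0, hg0, hfn, hgn, hr⟩
    set G : ℝ → ℝ := fun x => ∫ y in I01, c x y * g y with hGdef
    -- r = ∫ f · G
    have hrr : r = ∫ x in I01, f x * G x := by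
      rw [hr]
      apply integral_congr_ae
      apply Filter.Eventually.of_forall
      intro x
      show (∫ y in I01, c x y * f x * g y) = f x * ∫ y in I01, c x y * g y
      rw [← integral_const_mul]
      apply integral_congr_ae
      apply Filter.Eventually.of_forall
      intro y
      show c x y * f x * g y = f x * (c x y * g y)
      ring
    -- G is a.e. strongly measurable
    have hgm : AEStronglyMeasurable g μ01 := hg.1
    have hGm : AEStronglyMeasurable G μ01 := by
      set g' := hgm.mk g with hg'def
      have hGeq : ∀ x, G x = ∫ y in I01, c x y * g' y := fun x =>
        integral_congr_ae (by filter_upwards [hgm.ae_eq_mk] with y hy; rw [hy])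
      have hsm : StronglyMeasurable fun p : ℝ × ℝ => c p.1 p.2 * g' p.2 :=
        ((hc_meas.mul ((hgm.stronglyMeasurable_mk.measurable).comp
          measurable_snd)) : Measurable fun p : ℝ × ℝ => c p.1 p.2 * g' p.2).stronglyMeasurable
      have : StronglyMeasurable fun x => ∫ y in I01, c x y * g' y :=
        hsm.integral_prod_right'
      exact this.aestronglyMeasurable.congr
        (Filter.Eventually.of_forall fun x => (hGeq x).symm)
    -- G is in L²
    have hG2 : MemLp G 2 μ01 := by
      have hEmem : MemLp (fun x =>
          ((∫ y in I01, |g y|) / 4) * ((∫ y in I01, |c₂ x y|) + |c x 1 - c x 0|)) 2 μ01 := by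
        have habs : MemLp (fun x => |c x 1 - c x 0|) 2 (volume.restrict I01) := by
          simpa [Real.norm_eq_abs, μ01] using hL2_bd.norm
        exact (MemLp.add hL2_int habs).const_mul _
      refine MemLp.of_le hEmem hGm ?_
      refine (ae_restrict_mem I01_meas).mono fun x hx => ?_
      have hkey := (key_est (c x) (c₂ x) g (hderiv x hx) (hderiv_cont x hx) hg hg0).2
      rw [Real.norm_eq_abs, Real.norm_eq_abs]
      refine le_trans hkey (le_trans (le_of_eq (by ring)) (le_abs_self _))
    -- ∫ G² ≤ (k₁+k₂)/12
    have hGsq : (∫ x in I01, G x ^ 2) ≤ (k₁ + k₂) / 12 := by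
      have := hp1 g hg hg0
      rw [hgn, mul_one] at this
      exact this
    have hGsqnn : 0 ≤ ∫ x in I01, G x ^ 2 := integral_nonneg fun x => sq_nonneg _
    -- Cauchy–Schwarz
    have hcs : r ^ 2 ≤ (∫ x in I01, f x ^ 2) * ∫ x in I01, G x ^ 2 := by
      rw [hrr]
      exact cs_int f G hf.integrable_sq hG2.integrable_sq (mul_int_of_L2 hf hG2)
    have hr2 : r ^ 2 ≤ (k₁ + k₂) / 12 := by
      rw [hfn, one_mul] at hcs
      exact hcs.trans hGsq
    calc r ≤ |r| := le_abs_self r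
      _ = Real.sqrt (r ^ 2) := (Real.sqrt_sq_eq_abs r).symm
      _ ≤ Real.sqrt ((k₁ + k₂) / 12) := Real.sqrt_le_sqrt hr2
  · rw [show (1:ℝ) = Real.sqrt 1 from Real.sqrt_one.symm]
    apply Real.sqrt_lt_sqrt hKnn
    linarith
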